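/- For every (r,p) ∈ ℝ^{N−1}×ℝ^N, the conserved quantity I(r,p) = (1/2)[ Σ_{x=1}^N (r_x − r_{x−1})²/m_x + Σ_{x=1}^{N−1} (p_{x+1}/m_{x+1} − p_x/m_x)² ] (with r_0 = r_N = 0) admits the eigenmode expansion I(r,p) = (1/2) Σ_{k=1}^{N−1} ω_k² ( ⟨p, ψ^k⟩² + ω_k^{−2} ⟨r, ∇₊ψ^k⟩² ). -/

import Mathlib

open Finset

/-- The disordered harmonic chain dynamics on `{1,…,N}`: `r` has components `1 ≤ x ≤ N-1`
(with the convention `r_0 = r_N = 0`) and `p` has components `1 ≤ x ≤ N`. -/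
def IsChainSolution (N : ℕ) (m : ℕ → ℝ) (r p : ℝ → ℕ → ℝ) : Prop :=
  (∀ t : ℝ, r t 0 = 0) ∧ (∀ t : ℝ, r t N = 0) ∧
  (∀ (t : ℝ) (x : ℕ), 1 ≤ x → x ≤ N - 1 →
    HasDerivAt (fun s => r s x) (p t (x + 1) / m (x + 1) - p t x / m x) t) ∧
  (∀ (t : ℝ) (x : ℕ), 1 ≤ x → x ≤ N →
    HasDerivAt (fun s => p s x) (r t x - r t (x - 1)) t)

/-- Eigenmodes of the operator `M⁻¹(−Δ)` with free boundary conditions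
(`ψ_0 = ψ_1`, `ψ_{N+1} = ψ_N`), normalized by `⟨ψ^j, Mψ^k⟩ = δ_{jk}`, with `ω_0 = 0` and
`ω_k > 0` for `1 ≤ k ≤ N−1`. -/
def IsEigenSystem (N : ℕ) (m : ℕ → ℝ) (ψ : ℕ → ℕ → ℝ) (W : ℕ → ℝ) : Prop :=
  (∀ k ≤ N - 1, ψ k 0 = ψ k 1 ∧ ψ k (N + 1) = ψ k N) ∧
  (∀ k ≤ N - 1, ∀ x : ℕ, 1 ≤ x → x ≤ N →
    -(ψ k (x + 1) - 2 * ψ k x + ψ k (x - 1)) = (W k) ^ 2 * (m x * ψ k x)) ∧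
  (∀ j ≤ N - 1, ∀ k ≤ N - 1,
    (∑ x ∈ Finset.Icc 1 N, m x * ψ j x * ψ k x) = if j = k then 1 else 0) ∧
  W 0 = 0 ∧ (∀ k : ℕ, 1 ≤ k → k ≤ N - 1 → 0 < W k)

private lemma abel_sum (u e : ℕ → ℝ) :
    ∀ n, 1 ≤ n →
      ∑ x ∈ Finset.Icc 1 n, u x * (e (x - 1) - e x)
        = (∑ x ∈ Finset.Icc 1 (n - 1), (u (x + 1) - u x) * e x) + u 1 * e 0 - u n * e n := by
  intro n hn
  induction n, hn using Nat.le_induction with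
  | base => simp [Finset.Icc_self]; ring
  | succ n hn ih =>
    rw [Finset.sum_Icc_succ_top (by omega : 1 ≤ n + 1), ih]
    have h1 : n + 1 - 1 = n := by omega
    rw [h1]
    have h2 : n - 1 + 1 = n := by omega
    have hsplit : ∑ x ∈ Finset.Icc 1 n, (u (x + 1) - u x) * e x
        = (∑ x ∈ Finset.Icc 1 (n - 1), (u (x + 1) - u x) * e x)
          + (u (n - 1 + 1 + 1) - u (n - 1 + 1)) * e (n - 1 + 1) := by
      conv_lhs => rw [← h2]
      rw [Finset.sum_Icc_succ_top (by omega)]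
    rw [hsplit, h2]
    ring

private lemma sum_Icc_one (n : ℕ) (f : ℕ → ℝ) :
    ∑ x ∈ Finset.Icc 1 n, f x = ∑ i ∈ Finset.range n, f (i + 1) := by
  induction n with
  | zero => simp
  | succ n ih => rw [Finset.sum_Icc_succ_top (by omega), Finset.sum_range_succ, ih]

private lemma completeness (N : ℕ) (hN : 1 ≤ N) (m : ℕ → ℝ) (hm : ∀ x, 0 < m x)
    (ψ : ℕ → ℕ → ℝ)
    (horth : ∀ j ≤ N - 1, ∀ k ≤ N - 1,
      (∑ x ∈ Finset.Icc 1 N, m x * ψ j x * ψ k x) = if j = k then 1 else 0) :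
    ∀ x ∈ Finset.Icc 1 N, ∀ y ∈ Finset.Icc 1 N,
      (∑ k ∈ Finset.range N, m y * (ψ k x * ψ k y)) = if x = y then 1 else 0 := by
  set A : Matrix (Fin N) (Fin N) ℝ := fun j i => ψ j (i + 1) * m (i + 1) with hA
  set B : Matrix (Fin N) (Fin N) ℝ := fun i k => ψ k (i + 1) with hB
  have hAB : A * B = 1 := by
    ext j k
    rw [Matrix.mul_apply, Matrix.one_apply]
    have horth' := horth j (by omega) k (by omega)
    rw [sum_Icc_one] at horth'
    have hiff : ((j : ℕ) = (k : ℕ)) = (j = k) := by simp [Fin.val_inj]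
    simp only [hiff] at horth'
    rw [← horth', ← Fin.sum_univ_eq_sum_range (fun i => m (i + 1) * ψ j (i + 1) * ψ k (i + 1)) N]
    apply Finset.sum_congr rfl
    intro i _
    simp only [hA, hB]
    ring
  have hBA : B * A = 1 := mul_eq_one_comm.mp hAB
  intro x hx y hy
  simp only [Finset.mem_Icc] at hx hy
  have hent := congrFun (congrFun hBA ⟨x - 1, by omega⟩) (⟨y - 1, by omega⟩ : Fin N)
  rw [Matrix.mul_apply, Matrix.one_apply] at hent
  have hxi : (x - 1) + 1 = x := by omega
  have hyj : (y - 1) + 1 = y := by omega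
  simp only [hA, hB, hxi, hyj] at hent
  have hiff : (⟨x - 1, by omega⟩ = (⟨y - 1, by omega⟩ : Fin N)) = (x = y) := by
    simp only [eq_iff_iff, Fin.mk.injEq]
    omega
  simp only [hiff] at hent
  calc ∑ k ∈ Finset.range N, m y * (ψ k x * ψ k y)
      = ∑ k : Fin N, m y * (ψ (k : ℕ) x * ψ (k : ℕ) y) :=
        (Fin.sum_univ_eq_sum_range (fun k => m y * (ψ k x * ψ k y)) N).symm
    _ = ∑ k : Fin N, ψ (k : ℕ) x * (ψ (k : ℕ) y * m y) := by
        apply Finset.sum_congr rfl; intros; ring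
    _ = if x = y then 1 else 0 := hent

private lemma bilinear (N : ℕ) (hN : 1 ≤ N) (m : ℕ → ℝ) (hm : ∀ x, 0 < m x)
    (ψ : ℕ → ℕ → ℝ)
    (horth : ∀ j ≤ N - 1, ∀ k ≤ N - 1,
      (∑ x ∈ Finset.Icc 1 N, m x * ψ j x * ψ k x) = if j = k then 1 else 0)
    (g h : ℕ → ℝ) :
    ∑ k ∈ Finset.range N, (∑ x ∈ Finset.Icc 1 N, ψ k x * g x) * (∑ y ∈ Finset.Icc 1 N, ψ k y * h y)
      = ∑ x ∈ Finset.Icc 1 N, g x * h x / m x := by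
  have key : ∀ x ∈ Finset.Icc 1 N, ∀ y ∈ Finset.Icc 1 N,
      ∑ k ∈ Finset.range N, (ψ k x * g x) * (ψ k y * h y)
        = if x = y then g x * h x / m x else 0 := by
    intro x hx y hy
    have hc := completeness N hN m hm ψ horth x hx y hy
    have hmy := (hm y).ne'
    have : ∑ k ∈ Finset.range N, (ψ k x * g x) * (ψ k y * h y)
        = (g x * h y / m y) * ∑ k ∈ Finset.range N, m y * (ψ k x * ψ k y) := by
      rw [Finset.mul_sum]
      apply Finset.sum_congr rfl
      intro k _
      field_simp
    rw [this, hc]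
    split_ifs with hxy
    · subst hxy; rw [mul_one]
    · rw [mul_zero]
  calc ∑ k ∈ Finset.range N, (∑ x ∈ Finset.Icc 1 N, ψ k x * g x) * (∑ y ∈ Finset.Icc 1 N, ψ k y * h y)
      = ∑ k ∈ Finset.range N, ∑ x ∈ Finset.Icc 1 N, ∑ y ∈ Finset.Icc 1 N,
          (ψ k x * g x) * (ψ k y * h y) := by
        refine Finset.sum_congr rfl fun k _ => ?_
        rw [Finset.sum_mul_sum]
    _ = ∑ x ∈ Finset.Icc 1 N, ∑ y ∈ Finset.Icc 1 N, ∑ k ∈ Finset.range N,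
          (ψ k x * g x) * (ψ k y * h y) := by
        rw [Finset.sum_comm]
        exact Finset.sum_congr rfl fun x _ => Finset.sum_comm
    _ = ∑ x ∈ Finset.Icc 1 N, ∑ y ∈ Finset.Icc 1 N,
          (if x = y then g x * h x / m x else 0) := by
        refine Finset.sum_congr rfl fun x hx => Finset.sum_congr rfl fun y hy => key x hx y hy
    _ = ∑ x ∈ Finset.Icc 1 N, g x * h x / m x := by
        refine Finset.sum_congr rfl fun x hx => ?_
        rw [Finset.sum_ite_eq]
        simp [hx]

private lemma expand (N : ℕ) (hN : 1 ≤ N) (m : ℕ → ℝ) (hm : ∀ x, 0 < m x)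
    (ψ : ℕ → ℕ → ℝ)
    (horth : ∀ j ≤ N - 1, ∀ k ≤ N - 1,
      (∑ x ∈ Finset.Icc 1 N, m x * ψ j x * ψ k x) = if j = k then 1 else 0)
    (g : ℕ → ℝ) :
    ∀ y ∈ Finset.Icc 1 N,
      ∑ k ∈ Finset.range N, ψ k y * (∑ x ∈ Finset.Icc 1 N, ψ k x * g x) = g y / m y := by
  intro y hy
  have key : ∀ x ∈ Finset.Icc 1 N,
      ∑ k ∈ Finset.range N, ψ k y * (ψ k x * g x) = if x = y then g y / m y else 0 := by
    intro x hx
    have hc := completeness N hN m hm ψ horth x hx y hy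
    have hmy := (hm y).ne'
    have : ∑ k ∈ Finset.range N, ψ k y * (ψ k x * g x)
        = (g x / m y) * ∑ k ∈ Finset.range N, m y * (ψ k x * ψ k y) := by
      rw [Finset.mul_sum]
      apply Finset.sum_congr rfl
      intro k _
      field_simp
    rw [this, hc]
    split_ifs with hxy
    · subst hxy; rw [mul_one]
    · rw [mul_zero]
  calc ∑ k ∈ Finset.range N, ψ k y * (∑ x ∈ Finset.Icc 1 N, ψ k x * g x)
      = ∑ k ∈ Finset.range N, ∑ x ∈ Finset.Icc 1 N, ψ k y * (ψ k x * g x) := by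
        refine Finset.sum_congr rfl fun k _ => ?_
        rw [Finset.mul_sum]
    _ = ∑ x ∈ Finset.Icc 1 N, ∑ k ∈ Finset.range N, ψ k y * (ψ k x * g x) := Finset.sum_comm
    _ = ∑ x ∈ Finset.Icc 1 N, (if x = y then g y / m y else 0) :=
        Finset.sum_congr rfl fun x hx => key x hx
    _ = g y / m y := by rw [Finset.sum_ite_eq']; simp [hy]

private lemma psi0_const (N : ℕ) (ψ0 : ℕ → ℝ) (hBC : ψ0 0 = ψ0 1)
    (heq : ∀ x : ℕ, 1 ≤ x → x ≤ N → ψ0 (x + 1) - 2 * ψ0 x + ψ0 (x - 1) = 0) :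
    ∀ x ≤ N, ψ0 (x + 1) = ψ0 x := by
  intro x
  induction x with
  | zero => intro _; exact hBC.symm
  | succ n ih =>
    intro hn
    have h1 := heq (n + 1) (by omega) hn
    have h2 := ih (by omega)
    simp only [Nat.add_sub_cancel] at h1
    linarith

theorem stmt16' (N : ℕ) (hN : 2 ≤ N) (m : ℕ → ℝ) (hm : ∀ x, 0 < m x)
    (ψ : ℕ → ℕ → ℝ) (W : ℕ → ℝ)
    (hBC : ∀ k ≤ N - 1, ψ k 0 = ψ k 1 ∧ ψ k (N + 1) = ψ k N)
    (heq : ∀ k ≤ N - 1, ∀ x : ℕ, 1 ≤ x → x ≤ N →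
      -(ψ k (x + 1) - 2 * ψ k x + ψ k (x - 1)) = (W k) ^ 2 * (m x * ψ k x))
    (horth : ∀ j ≤ N - 1, ∀ k ≤ N - 1,
      (∑ x ∈ Finset.Icc 1 N, m x * ψ j x * ψ k x) = if j = k then 1 else 0)
    (hW0 : W 0 = 0) (hWpos : ∀ k : ℕ, 1 ≤ k → k ≤ N - 1 → 0 < W k)
    (r p : ℕ → ℝ) (hr0 : r 0 = 0) (hrN : r N = 0) :
    (1 / 2) * ((∑ x ∈ Finset.Icc 1 N, (r x - r (x - 1)) ^ 2 / m x)
        + ∑ x ∈ Finset.Icc 1 (N - 1), (p (x + 1) / m (x + 1) - p x / m x) ^ 2)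
      = (1 / 2) * ∑ k ∈ Finset.Icc 1 (N - 1),
          (W k) ^ 2 * ((∑ x ∈ Finset.Icc 1 N, ψ k x * p x) ^ 2
            + ((W k) ^ 2)⁻¹
              * (∑ x ∈ Finset.Icc 1 (N - 1), (ψ k (x + 1) - ψ k x) * r x) ^ 2) := by
  have hN1 : 1 ≤ N := by omega
  -- Abel summation for the r-part
  have habelA : ∀ k : ℕ, ∑ x ∈ Finset.Icc 1 N, ψ k x * (r x - r (x - 1))
      = -∑ x ∈ Finset.Icc 1 (N - 1), (ψ k (x + 1) - ψ k x) * r x := by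
    intro k
    have h := abel_sum (fun x => ψ k x) r N hN1
    simp only [hr0, hrN, mul_zero, add_zero, sub_zero] at h
    have h2 : ∑ x ∈ Finset.Icc 1 N, ψ k x * (r x - r (x - 1))
        = -∑ x ∈ Finset.Icc 1 N, ψ k x * (r (x - 1) - r x) := by
      rw [← Finset.sum_neg_distrib]
      exact Finset.sum_congr rfl fun x _ => by ring
    rw [h2, h]
  -- A part
  have hA : (∑ x ∈ Finset.Icc 1 N, (r x - r (x - 1)) ^ 2 / m x)
      = ∑ k ∈ Finset.range N,
          (∑ x ∈ Finset.Icc 1 (N - 1), (ψ k (x + 1) - ψ k x) * r x) ^ 2 := by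
    calc ∑ x ∈ Finset.Icc 1 N, (r x - r (x - 1)) ^ 2 / m x
        = ∑ x ∈ Finset.Icc 1 N, (r x - r (x - 1)) * (r x - r (x - 1)) / m x :=
          Finset.sum_congr rfl fun x _ => by ring
      _ = ∑ k ∈ Finset.range N,
            (∑ x ∈ Finset.Icc 1 N, ψ k x * (r x - r (x - 1)))
              * (∑ y ∈ Finset.Icc 1 N, ψ k y * (r y - r (y - 1))) :=
          (bilinear N hN1 m hm ψ horth _ _).symm
      _ = _ := by
          refine Finset.sum_congr rfl fun k _ => ?_
          rw [habelA k]; ring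
  -- per-mode Abel + eigenvalue equation for the p-part
  have hk : ∀ k ≤ N - 1,
      ∑ x ∈ Finset.Icc 1 (N - 1),
          (p (x + 1) / m (x + 1) - p x / m x) * (ψ k (x + 1) - ψ k x)
        = W k ^ 2 * ∑ x ∈ Finset.Icc 1 N, ψ k x * p x := by
    intro k hkle
    have h := abel_sum (fun x => p x / m x) (fun x => ψ k (x + 1) - ψ k x) N hN1
    have hb1 : ψ k (0 + 1) - ψ k 0 = 0 := by
      have := (hBC k hkle).1; simp [← this]
    have hb2 : ψ k (N + 1) - ψ k N = 0 := by
      have := (hBC k hkle).2; simp [this]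
    rw [hb1, hb2, mul_zero, mul_zero, add_zero, sub_zero] at h
    rw [← h, Finset.mul_sum]
    refine Finset.sum_congr rfl fun x hx => ?_
    simp only [Finset.mem_Icc] at hx
    have hx1 : x - 1 + 1 = x := by omega
    rw [hx1]
    have he := heq k hkle x hx.1 hx.2
    have hpx : p x / m x * m x = p x := div_mul_cancel₀ _ (hm x).ne'
    calc p x / m x * ((ψ k x - ψ k (x - 1)) - (ψ k (x + 1) - ψ k x))
        = p x / m x * (-(ψ k (x + 1) - 2 * ψ k x + ψ k (x - 1))) := by ring
      _ = p x / m x * (W k ^ 2 * (m x * ψ k x)) := by rw [he]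
      _ = W k ^ 2 * (ψ k x * (p x / m x * m x)) := by ring
      _ = W k ^ 2 * (ψ k x * p x) := by rw [hpx]
  -- pointwise eigenmode expansion of the momentum differences
  have hexp : ∀ x ∈ Finset.Icc 1 (N - 1),
      p (x + 1) / m (x + 1) - p x / m x
        = ∑ k ∈ Finset.range N,
            (ψ k (x + 1) - ψ k x) * (∑ y ∈ Finset.Icc 1 N, ψ k y * p y) := by
    intro x hx
    simp only [Finset.mem_Icc] at hx
    have h1 := expand N hN1 m hm ψ horth p (x + 1)
      (by simp only [Finset.mem_Icc]; omega)
    have h2 := expand N hN1 m hm ψ horth p x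
      (by simp only [Finset.mem_Icc]; omega)
    calc p (x + 1) / m (x + 1) - p x / m x
        = (∑ k ∈ Finset.range N, ψ k (x + 1) * (∑ y ∈ Finset.Icc 1 N, ψ k y * p y))
          - ∑ k ∈ Finset.range N, ψ k x * (∑ y ∈ Finset.Icc 1 N, ψ k y * p y) := by
          rw [h1, h2]
      _ = _ := by
          rw [← Finset.sum_sub_distrib]
          exact Finset.sum_congr rfl fun k _ => by ring
  -- B part
  have hB : ∑ x ∈ Finset.Icc 1 (N - 1), (p (x + 1) / m (x + 1) - p x / m x) ^ 2
      = ∑ k ∈ Finset.range N, W k ^ 2 * (∑ x ∈ Finset.Icc 1 N, ψ k x * p x) ^ 2 := by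
    calc ∑ x ∈ Finset.Icc 1 (N - 1), (p (x + 1) / m (x + 1) - p x / m x) ^ 2
        = ∑ x ∈ Finset.Icc 1 (N - 1), ∑ k ∈ Finset.range N,
            (p (x + 1) / m (x + 1) - p x / m x)
              * ((ψ k (x + 1) - ψ k x) * (∑ y ∈ Finset.Icc 1 N, ψ k y * p y)) := by
          refine Finset.sum_congr rfl fun x hx => ?_
          rw [← Finset.mul_sum, ← hexp x hx]; ring
      _ = ∑ k ∈ Finset.range N, ∑ x ∈ Finset.Icc 1 (N - 1),
            (p (x + 1) / m (x + 1) - p x / m x)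
              * ((ψ k (x + 1) - ψ k x) * (∑ y ∈ Finset.Icc 1 N, ψ k y * p y)) :=
          Finset.sum_comm
      _ = ∑ k ∈ Finset.range N,
            (∑ y ∈ Finset.Icc 1 N, ψ k y * p y)
              * ∑ x ∈ Finset.Icc 1 (N - 1),
                  (p (x + 1) / m (x + 1) - p x / m x) * (ψ k (x + 1) - ψ k x) := by
          refine Finset.sum_congr rfl fun k _ => ?_
          rw [Finset.mul_sum]
          exact Finset.sum_congr rfl fun x _ => by ring
      _ = _ := by
          refine Finset.sum_congr rfl fun k hkmem => ?_
          rw [hk k (by simp only [Finset.mem_range] at hkmem; omega)]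
          ring
  -- the zero mode contributes nothing
  have hrange : Finset.range N = insert 0 (Finset.Icc 1 (N - 1)) := by
    ext x; simp only [Finset.mem_range, Finset.mem_insert, Finset.mem_Icc]; omega
  have h0notin : (0 : ℕ) ∉ Finset.Icc 1 (N - 1) := by simp
  have hb0 : ∑ x ∈ Finset.Icc 1 (N - 1), (ψ 0 (x + 1) - ψ 0 x) * r x = 0 := by
    apply Finset.sum_eq_zero
    intro x hx
    simp only [Finset.mem_Icc] at hx
    have hconst := psi0_const N (ψ 0) ((hBC 0 (by omega)).1)
      (fun y h1 h2 => by
        have h3 := heq 0 (by omega) y h1 h2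
        rw [hW0] at h3
        nlinarith [h3]) x (by omega)
    rw [hconst]; ring
  -- assemble
  rw [hA, hB, hrange, Finset.sum_insert h0notin, Finset.sum_insert h0notin, hb0, hW0]
  have hper : ∀ k ∈ Finset.Icc 1 (N - 1),
      (W k) ^ 2 * ((∑ x ∈ Finset.Icc 1 N, ψ k x * p x) ^ 2
          + ((W k) ^ 2)⁻¹
            * (∑ x ∈ Finset.Icc 1 (N - 1), (ψ k (x + 1) - ψ k x) * r x) ^ 2)
        = (∑ x ∈ Finset.Icc 1 (N - 1), (ψ k (x + 1) - ψ k x) * r x) ^ 2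
          + W k ^ 2 * (∑ x ∈ Finset.Icc 1 N, ψ k x * p x) ^ 2 := by
    intro k hkmem
    simp only [Finset.mem_Icc] at hkmem
    have hWk : W k ≠ 0 := (hWpos k hkmem.1 hkmem.2).ne'
    field_simp
    ring
  rw [Finset.sum_congr rfl hper, Finset.sum_add_distrib]
  ring

/-- eigenmode expansion of the conserved quantity
`I(r,p) = (1/2)[ Σ_{x=1}^N (r_x − r_{x−1})²/m_x + Σ_{x=1}^{N−1} (p_{x+1}/m_{x+1} − p_x/m_x)² ]`
(with the conventions `r_0 = r_N = 0`). -/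
theorem stmt16 (N : ℕ) (hN : 2 ≤ N) (m : ℕ → ℝ) (hm : ∀ x, 0 < m x)
    (ψ : ℕ → ℕ → ℝ) (W : ℕ → ℝ) (heigen : IsEigenSystem N m ψ W)
    (r p : ℕ → ℝ) (hr0 : r 0 = 0) (hrN : r N = 0) :
    (1 / 2) * ((∑ x ∈ Finset.Icc 1 N, (r x - r (x - 1)) ^ 2 / m x)
        + ∑ x ∈ Finset.Icc 1 (N - 1), (p (x + 1) / m (x + 1) - p x / m x) ^ 2)
      = (1 / 2) * ∑ k ∈ Finset.Icc 1 (N - 1),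
          (W k) ^ 2 * ((∑ x ∈ Finset.Icc 1 N, ψ k x * p x) ^ 2
            + ((W k) ^ 2)⁻¹
              * (∑ x ∈ Finset.Icc 1 (N - 1), (ψ k (x + 1) - ψ k x) * r x) ^ 2) := by
  obtain ⟨hBC, heq, horth, hW0, hWpos⟩ := heigen
  exact stmt16' N hN m hm ψ W hBC heq horth hW0 hWpos r p hr0 hrN
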